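/- If the sequential regression models Q̃₁ = Q₁ and Q̃₂ = Q₂ are correctly specified (while π̃_A, π̃_R may be arbitrary measurable functions with values in (0,1)), then E[D̃(O)] = 0 where D̃ is the EIF-based estimating function with true ψ plugged in. -/

import Mathlib

open MeasureTheory
open scoped ENNReal NNReal

lemma aux_pullout_zero {Ω : Type*} {m m0 : MeasurableSpace Ω}
    (hm : m ≤ m0) (μ : Measure Ω) [IsProbabilityMeasure μ]
    {f T : Ω → ℝ} (hf : StronglyMeasurable[m] f)
    (hfT : Integrable (fun ω => f ω * T ω) μ) (hT : Integrable T μ)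
    (hce : μ[T|m] =ᵐ[μ] 0) :
    ∫ ω, f ω * T ω ∂μ = 0 := by
  have hfT' : Integrable (f * T) μ := hfT
  have h := condExp_mul_of_stronglyMeasurable_left hf hfT' hT
  have h2 : f * μ[T|m] =ᵐ[μ] 0 := by
    filter_upwards [hce] with ω hω
    simp [Pi.mul_apply, hω]
  have h3 : μ[f * T|m] =ᵐ[μ] (0 : Ω → ℝ) := h.trans h2
  have hI : ∫ ω, (μ[f * T|m]) ω ∂μ = ∫ ω, (f * T) ω ∂μ := integral_condExp hm
  calc ∫ ω, f ω * T ω ∂μ = ∫ ω, (f * T) ω ∂μ := rfl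
    _ = ∫ ω, (μ[f * T|m]) ω ∂μ := hI.symm
    _ = ∫ ω, (0 : Ω → ℝ) ω ∂μ := integral_congr_ae h3
    _ = 0 := by simp

lemma aux_integrable {Ω : Type*} {m m0 : MeasurableSpace Ω}
    (hm : m ≤ m0) (μ : Measure Ω) [IsProbabilityMeasure μ]
    {g T k : Ω → ℝ} (hg : StronglyMeasurable[m] g) (hk : StronglyMeasurable[m] k)
    (hT : Integrable T μ) (hce : μ[T|m] =ᵐ[μ] 0)
    (hS : Integrable (fun ω => g ω * T ω + k ω) μ) :
    Integrable k μ := by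
  set S : Ω → ℝ := fun ω => g ω * T ω + k ω with hSdef
  -- main claim for truncation sets
  have claim : ∀ (n : ℕ) (B : Set Ω), MeasurableSet[m] B → (∀ ω ∈ B, |g ω| ≤ (n : ℝ)) →
      Integrable (B.indicator k) μ ∧
        ∫ ω, B.indicator k ω ∂μ = ∫ ω, B.indicator S ω ∂μ := by
    intro n B hB hBg
    have hfB : StronglyMeasurable[m] (B.indicator g) := hg.indicator hB
    have hbdd : ∀ ω, ‖B.indicator g ω‖ ≤ (n : ℝ) := by
      intro ω
      by_cases hω : ω ∈ B
      · simpa [Set.indicator_of_mem hω, Real.norm_eq_abs] using hBg ω hω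
      · simp [Set.indicator_of_notMem hω]
    have hgT : Integrable (fun ω => B.indicator g ω * T ω) μ :=
      hT.bdd_mul ((hfB.mono hm).aestronglyMeasurable) (ae_of_all _ hbdd)
    have hzero : ∫ ω, B.indicator g ω * T ω ∂μ = 0 :=
      aux_pullout_zero hm μ hfB hgT hT hce
    have hSind : Integrable (B.indicator S) μ := hS.indicator (hm _ hB)
    have hkind : B.indicator k = fun ω => B.indicator S ω - B.indicator g ω * T ω := by
      funext ω
      by_cases hω : ω ∈ B
      · simp only [Set.indicator_of_mem hω, hSdef]; ring
      · simp [Set.indicator_of_notMem hω]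
    constructor
    · rw [hkind]; exact hSind.sub hgT
    · rw [hkind, integral_sub hSind hgT, hzero, sub_zero]
  -- the truncation sets
  set C : ℕ → Set Ω := fun n => {ω | |g ω| ≤ (n : ℝ)} with hCdef
  have hCmeas : ∀ n, MeasurableSet[m] (C n) := fun n =>
    (@Measurable.abs ℝ Ω _ _ _ m g _ _ hg.measurable) measurableSet_Iic
  have hCbound : ∀ n, ∀ ω ∈ C n, |g ω| ≤ (n : ℝ) := fun n ω hω => hω
  have hP : MeasurableSet[m] {ω | 0 ≤ k ω} :=
    measurableSet_le (measurable_const : @Measurable Ω ℝ m _ fun _ => (0 : ℝ)) hk.measurable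
  -- uniform bound on the truncated integrals
  have key : ∀ n, ∫ ω, |(C n).indicator k ω| ∂μ ≤ 2 * ∫ ω, |S ω| ∂μ := by
    intro n
    set Dp : Set Ω := C n ∩ {ω | 0 ≤ k ω} with hDp
    set Dm : Set Ω := C n ∩ {ω | 0 ≤ k ω}ᶜ with hDm
    obtain ⟨hip, hiep⟩ := claim n Dp ((hCmeas n).inter hP) (fun ω hω => hω.1)
    obtain ⟨him, hiem⟩ := claim n Dm ((hCmeas n).inter hP.compl) (fun ω hω => hω.1)
    have habs : (fun ω => |(C n).indicator k ω|) =
        fun ω => Dp.indicator k ω - Dm.indicator k ω := by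
      funext ω
      simp only [Set.indicator_apply, hDp, hDm, Set.mem_inter_iff, Set.mem_compl_iff,
        Set.mem_setOf_eq]
      by_cases h1 : ω ∈ C n
      · by_cases h2 : 0 ≤ k ω
        · simp [h1, h2, abs_of_nonneg h2]
        · simp [h1, h2, abs_of_neg (lt_of_not_ge h2)]
      · simp [h1]
    have hSabs : Integrable (fun ω => |S ω|) μ := hS.abs
    have hbnd : ∀ (B : Set Ω), MeasurableSet[m] B → |∫ ω, B.indicator S ω ∂μ| ≤ ∫ ω, |S ω| ∂μ := by
      intro B hB
      have h1 : Integrable (B.indicator S) μ := hS.indicator (hm _ hB)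
      calc |∫ ω, B.indicator S ω ∂μ| ≤ ∫ ω, |B.indicator S ω| ∂μ := by
            simpa [Real.norm_eq_abs] using norm_integral_le_integral_norm (B.indicator S) (μ := μ)
        _ ≤ ∫ ω, |S ω| ∂μ := by
            refine integral_mono h1.abs hSabs fun ω => ?_
            simpa [Real.norm_eq_abs] using norm_indicator_le_norm_self S ω (s := B)
    rw [habs, integral_sub hip him, hiep, hiem]
    have b1 := abs_le.1 (hbnd Dp ((hCmeas n).inter hP))
    have b2 := abs_le.1 (hbnd Dm ((hCmeas n).inter hP.compl))
    linarith [b1.1, b1.2, b2.1, b2.2]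
  -- monotone convergence
  have hmk : Measurable (fun ω => (‖k ω‖₊ : ℝ≥0∞)) :=
    ((hk.mono hm).measurable.nnnorm).coe_nnreal_ennreal
  set f : ℕ → Ω → ℝ≥0∞ := fun n => (C n).indicator (fun ω => (‖k ω‖₊ : ℝ≥0∞)) with hfdef
  have hfmeas : ∀ n, Measurable (f n) := fun n => hmk.indicator (hm _ (hCmeas n))
  have hmono : Monotone f := by
    intro a b hab
    refine Set.indicator_le_indicator_of_subset ?_ (fun ω => zero_le)
    intro ω hω
    have hω' : |g ω| ≤ (a : ℝ) := hω
    show |g ω| ≤ (b : ℝ)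
    exact le_trans hω' (Nat.cast_le.2 hab)
  have hsup : ∀ ω, ⨆ n, f n ω = (‖k ω‖₊ : ℝ≥0∞) := by
    intro ω
    apply le_antisymm
    · exact iSup_le fun n => Set.indicator_le_self _ _ ω
    · obtain ⟨n, hn⟩ := exists_nat_ge (|g ω|)
      calc (‖k ω‖₊ : ℝ≥0∞) = f n ω :=
            (Set.indicator_of_mem (show ω ∈ C n from hn) fun ω => (‖k ω‖₊ : ℝ≥0∞)).symm
        _ ≤ ⨆ n, f n ω := le_iSup (fun n => f n ω) n
  have hlin : ∫⁻ ω, ‖k ω‖₊ ∂μ = ⨆ n, ∫⁻ ω, f n ω ∂μ := by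
    rw [← lintegral_iSup hfmeas hmono]
    exact lintegral_congr fun ω => (hsup ω).symm
  have hbound : ∀ n, ∫⁻ ω, f n ω ∂μ ≤ ENNReal.ofReal (2 * ∫ ω, |S ω| ∂μ) := by
    intro n
    obtain ⟨hkint, -⟩ := claim n (C n) (hCmeas n) (hCbound n)
    have heq : ∀ ω, f n ω = (‖(C n).indicator k ω‖₊ : ℝ≥0∞) := by
      intro ω
      by_cases hω : ω ∈ C n
      · simp [hfdef, Set.indicator_of_mem hω]
      · simp [hfdef, Set.indicator_of_notMem hω]
    calc ∫⁻ ω, f n ω ∂μ = ∫⁻ ω, (‖(C n).indicator k ω‖₊ : ℝ≥0∞) ∂μ :=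
          lintegral_congr heq
      _ = ENNReal.ofReal (∫ ω, ‖(C n).indicator k ω‖ ∂μ) :=
          (ofReal_integral_norm_eq_lintegral_enorm hkint).symm
      _ ≤ ENNReal.ofReal (2 * ∫ ω, |S ω| ∂μ) := by
          refine ENNReal.ofReal_le_ofReal ?_
          simpa [Real.norm_eq_abs] using key n
  refine ⟨(hk.mono hm).aestronglyMeasurable, ?_⟩
  show ∫⁻ ω, ‖k ω‖₊ ∂μ < ⊤
  rw [hlin]
  exact lt_of_le_of_lt (iSup_le hbound) ENNReal.ofReal_lt_top

def mSeq1 {Ω 𝓦 𝓩 : Type*} [MeasurableSpace 𝓦] [MeasurableSpace 𝓩]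
    (W : Ω → 𝓦) (A : Ω → ℝ) (Z : Ω → 𝓩) : MeasurableSpace Ω :=
  MeasurableSpace.comap (fun ω => (W ω, A ω, Z ω)) inferInstance

def mSeq2 {Ω 𝓦 : Type*} [MeasurableSpace 𝓦]
    (W : Ω → 𝓦) (A : Ω → ℝ) : MeasurableSpace Ω :=
  MeasurableSpace.comap (fun ω => (W ω, A ω)) inferInstance

/-- Robustness condition (i): if the sequential regressions `Q̃₁ = Q₁`, `Q̃₂ = Q₂`
are correctly specified, then `E[D̃(O)] = 0` for arbitrary measurable putative
propensity models `π̃_A, π̃_R` with values in `(0,1)`. -/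
theorem estimating_equation_robust_Q
    (Ω 𝓦 𝓩 : Type*) [MeasurableSpace Ω] [MeasurableSpace 𝓦] [MeasurableSpace 𝓩]
    (μ : Measure Ω) [IsProbabilityMeasure μ]
    (W : Ω → 𝓦) (Z : Ω → 𝓩) (A R Y : Ω → ℝ)
    (hW : Measurable W) (hZ : Measurable Z) (hA : Measurable A)
    (hR : Measurable R) (hY : Measurable Y)
    (hAbin : ∀ ω, A ω = 0 ∨ A ω = 1) (hRbin : ∀ ω, R ω = 0 ∨ R ω = 1)
    -- true sequential regressions (with outcome missing at random):
    (Q₁ : 𝓦 × ℝ × 𝓩 → ℝ) (Q₂ : 𝓦 × ℝ → ℝ) (ψ : ℝ)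
    (hQ₁ : (fun ω => Q₁ (W ω, A ω, Z ω)) =ᵐ[μ]
      μ[Y | MeasurableSpace.comap (fun ω => (W ω, A ω, Z ω)) inferInstance])
    (hMAR : μ[(fun ω => R ω * (Y ω - Q₁ (W ω, A ω, Z ω))) |
        MeasurableSpace.comap (fun ω => (W ω, A ω, Z ω)) inferInstance] =ᵐ[μ] 0)
    (hQ₂ : (fun ω => Q₂ (W ω, A ω)) =ᵐ[μ]
      μ[(fun ω => Q₁ (W ω, A ω, Z ω)) |
        MeasurableSpace.comap (fun ω => (W ω, A ω)) inferInstance])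
    (hψ : ψ = ∫ ω, (Q₂ (W ω, 1) - Q₂ (W ω, 0)) ∂μ)
    -- arbitrary putative propensity models with values in (0,1):
    (πA' : 𝓦 → ℝ) (πR' : 𝓦 × ℝ × 𝓩 → ℝ)
    (hπA'm : Measurable πA') (hπR'm : Measurable πR')
    (hπA'01 : ∀ w, 0 < πA' w ∧ πA' w < 1)
    (hπR'01 : ∀ x, 0 < πR' x ∧ πR' x < 1)
    -- the estimating function with the true ψ plugged in:
    (D' : Ω → ℝ)
    (hD' : D' = fun ω =>
      (A ω - πA' (W ω)) / (πA' (W ω) * (1 - πA' (W ω))) * (R ω / πR' (W ω, A ω, Z ω)) *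
          (Y ω - Q₁ (W ω, A ω, Z ω))
        + (A ω - πA' (W ω)) / (πA' (W ω) * (1 - πA' (W ω))) *
          (Q₁ (W ω, A ω, Z ω) - Q₂ (W ω, A ω))
        + (Q₂ (W ω, 1) - Q₂ (W ω, 0) - ψ))
    (hDint : Integrable D' μ)
    (hInt₁ : Integrable (fun ω => R ω * (Y ω - Q₁ (W ω, A ω, Z ω))) μ)
    (hInt₂ : Integrable (fun ω => Q₁ (W ω, A ω, Z ω)) μ)
    (hInt₃ : Integrable (fun ω => Q₂ (W ω, 1) - Q₂ (W ω, 0)) μ) :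
    ∫ ω, D' ω ∂μ = 0 := by
  -- σ-algebras generated by (W,A,Z) and (W,A)
  rw [show (MeasurableSpace.comap (fun ω => (W ω, A ω, Z ω)) inferInstance :
      MeasurableSpace Ω) = mSeq1 W A Z from rfl] at hQ₁ hMAR
  rw [show (MeasurableSpace.comap (fun ω => (W ω, A ω)) inferInstance :
      MeasurableSpace Ω) = mSeq2 W A from rfl] at hQ₂
  have hmG : mSeq1 W A Z ≤ ‹MeasurableSpace Ω› := (hW.prodMk (hA.prodMk hZ)).comap_le
  have hmG2 : mSeq2 W A ≤ ‹MeasurableSpace Ω› := (hW.prodMk hA).comap_le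
  have hle : mSeq2 W A ≤ mSeq1 W A Z := by
    show MeasurableSpace.comap (fun ω => (W ω, A ω)) inferInstance ≤
      MeasurableSpace.comap (fun ω => (W ω, A ω, Z ω)) inferInstance
    have hcomp : (fun ω => (W ω, A ω)) =
        (fun p : 𝓦 × ℝ × 𝓩 => (p.1, p.2.1)) ∘ (fun ω => (W ω, A ω, Z ω)) := rfl
    rw [hcomp, ← MeasurableSpace.comap_comp]
    exact MeasurableSpace.comap_mono
      ((measurable_fst.prodMk (measurable_fst.comp measurable_snd)).comap_le)
  have hWAZ : Measurable[mSeq1 W A Z] (fun ω => (W ω, A ω, Z ω)) :=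
    Measurable.of_comap_le le_rfl
  have hWA : Measurable[mSeq2 W A] (fun ω => (W ω, A ω)) :=
    Measurable.of_comap_le le_rfl
  -- measurable factors
  have hφ : Measurable (fun p : 𝓦 × ℝ × 𝓩 =>
      (p.2.1 - πA' p.1) / (πA' p.1 * (1 - πA' p.1)) / πR' p) := by
    refine Measurable.div (Measurable.div ?_ ?_) hπR'm
    · exact (measurable_fst.comp measurable_snd).sub (hπA'm.comp measurable_fst)
    · exact (hπA'm.comp measurable_fst).mul (measurable_const.sub (hπA'm.comp measurable_fst))
  have hφ2 : Measurable (fun p : 𝓦 × ℝ =>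
      (p.2 - πA' p.1) / (πA' p.1 * (1 - πA' p.1))) := by
    refine Measurable.div ?_ ?_
    · exact measurable_snd.sub (hπA'm.comp measurable_fst)
    · exact (hπA'm.comp measurable_fst).mul (measurable_const.sub (hπA'm.comp measurable_fst))
  have hgSM : StronglyMeasurable[mSeq1 W A Z] (fun ω =>
      (A ω - πA' (W ω)) / (πA' (W ω) * (1 - πA' (W ω))) / πR' (W ω, A ω, Z ω)) :=
    (hφ.comp hWAZ).stronglyMeasurable
  have hhSM : StronglyMeasurable[mSeq2 W A] (fun ω =>
      (A ω - πA' (W ω)) / (πA' (W ω) * (1 - πA' (W ω)))) :=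
    (hφ2.comp hWA).stronglyMeasurable
  -- strongly measurable versions of the regressions
  set Q₁' : Ω → ℝ := μ[Y | mSeq1 W A Z] with hQ₁'def
  set Q₂' : Ω → ℝ := μ[(fun ω => Q₁ (W ω, A ω, Z ω)) | mSeq2 W A] with hQ₂'def
  have hq1 : (fun ω => Q₁ (W ω, A ω, Z ω)) =ᵐ[μ] Q₁' := hQ₁
  have hq2 : (fun ω => Q₂ (W ω, A ω)) =ᵐ[μ] Q₂' := hQ₂
  have hQ₁'SM : StronglyMeasurable[mSeq1 W A Z] Q₁' := stronglyMeasurable_condExp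
  have hQ₂'SM : StronglyMeasurable[mSeq2 W A] Q₂' := stronglyMeasurable_condExp
  have hU'SM : StronglyMeasurable[mSeq1 W A Z] (fun ω => Q₁' ω - Q₂' ω) :=
    hQ₁'SM.sub (hQ₂'SM.mono hle)
  have hU'int : Integrable (fun ω => Q₁' ω - Q₂' ω) μ :=
    integrable_condExp.sub integrable_condExp
  -- conditional expectation of U' given mG2 vanishes
  have hUce : μ[(fun ω => Q₁' ω - Q₂' ω) | mSeq2 W A] =ᵐ[μ] 0 := by
    have hsub : μ[(fun ω => Q₁' ω - Q₂' ω) | mSeq2 W A] =ᵐ[μ]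
        fun ω => (μ[Q₁' | mSeq2 W A]) ω - (μ[Q₂' | mSeq2 W A]) ω := by
      have := condExp_sub (μ := μ) (m := mSeq2 W A) (f := Q₁') (g := Q₂')
        integrable_condExp integrable_condExp
      exact this
    have h1 : μ[Q₁' | mSeq2 W A] =ᵐ[μ] Q₂' := by
      have := condExp_congr_ae (m := mSeq2 W A) (μ := μ) hq1.symm
      exact this.trans (by rw [hQ₂'def])
    have h2 : μ[Q₂' | mSeq2 W A] = Q₂' :=
      condExp_of_stronglyMeasurable (μ := μ) hmG2 hQ₂'SM integrable_condExp
    refine hsub.trans ?_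
    filter_upwards [h1] with ω hω
    simp [hω, h2]
  -- the decomposition of D'
  set gf : Ω → ℝ := fun ω =>
    (A ω - πA' (W ω)) / (πA' (W ω) * (1 - πA' (W ω))) / πR' (W ω, A ω, Z ω) with hgfdef
  set Tf : Ω → ℝ := fun ω => R ω * (Y ω - Q₁ (W ω, A ω, Z ω)) with hTfdef
  set hf : Ω → ℝ := fun ω =>
    (A ω - πA' (W ω)) / (πA' (W ω) * (1 - πA' (W ω))) with hhfdef
  set kf : Ω → ℝ := fun ω => hf ω * (Q₁' ω - Q₂' ω) with hkfdef
  set t3 : Ω → ℝ := fun ω => Q₂ (W ω, 1) - Q₂ (W ω, 0) - ψ with ht3def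
  have hkSM : StronglyMeasurable[mSeq1 W A Z] kf := (hhSM.mono hle).mul hU'SM
  have hDae : D' =ᵐ[μ] fun ω => (gf ω * Tf ω + kf ω) + t3 ω := by
    filter_upwards [hq1, hq2] with ω h1 h2
    rw [hD', hgfdef, hTfdef, hkfdef, hhfdef, ht3def]
    simp only
    rw [← h1, ← h2]
    ring
  have ht3int : Integrable t3 μ := hInt₃.sub (integrable_const ψ)
  have hSint : Integrable (fun ω => gf ω * Tf ω + kf ω) μ := by
    have h1 : Integrable (fun ω => (gf ω * Tf ω + kf ω) + t3 ω) μ := hDint.congr hDae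
    have := h1.sub ht3int
    refine this.congr (Filter.EventuallyEq.of_eq ?_)
    funext ω; simp only [Pi.sub_apply]; ring
  have hTce : μ[Tf | mSeq1 W A Z] =ᵐ[μ] 0 := hMAR
  have hkint : Integrable kf μ := aux_integrable hmG μ hgSM hkSM hInt₁ hTce hSint
  have hgTint : Integrable (fun ω => gf ω * Tf ω) μ := by
    have := hSint.sub hkint
    refine this.congr (Filter.EventuallyEq.of_eq ?_)
    funext ω; simp only [Pi.sub_apply]; ring
  have hintgT : ∫ ω, gf ω * Tf ω ∂μ = 0 :=
    aux_pullout_zero hmG μ hgSM hgTint hInt₁ hTce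
  have hintk : ∫ ω, kf ω ∂μ = 0 :=
    aux_pullout_zero hmG2 μ hhSM hkint hU'int hUce
  have hintt3 : ∫ ω, t3 ω ∂μ = 0 := by
    rw [ht3def]
    simp only
    rw [integral_sub hInt₃ (integrable_const ψ), integral_const]
    simp [hψ]
  calc ∫ ω, D' ω ∂μ = ∫ ω, ((gf ω * Tf ω + kf ω) + t3 ω) ∂μ := integral_congr_ae hDae
    _ = ∫ ω, (gf ω * Tf ω + kf ω) ∂μ + ∫ ω, t3 ω ∂μ := integral_add hSint ht3int
    _ = (∫ ω, gf ω * Tf ω ∂μ + ∫ ω, kf ω ∂μ) + ∫ ω, t3 ω ∂μ := by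
        rw [integral_add hgTint hkint]
    _ = 0 := by rw [hintgT, hintk, hintt3]; ring
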